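/- Let d ≥ 1 and let S be the swap operator on ℂ^d ⊗ ℂ^d, i.e., the complex matrix indexed by (Fin d × Fin d) with entries S (i,j) (k,l) = 1 if i = l and j = k, and 0 otherwise. Then for every separable density matrix ρ indexed by (Fin d × Fin d), the real part of trace(S·ρ) is nonnegative. -/

import Mathlib

open Matrix ComplexOrder

lemma psd_trace_nonneg' {n : Type*} [Fintype n] [DecidableEq n]
    {M : Matrix n n ℂ} (hM : M.PosSemidef) : 0 ≤ M.trace := by
  have h : ∀ i, 0 ≤ M i i := fun i => by
    exact hM.diag_nonneg
  exact Finset.sum_nonneg fun i _ => h i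

open scoped MatrixOrder in
lemma trace_mul_psd_nonneg' {n : Type*} [Fintype n] [DecidableEq n]
    {A B : Matrix n n ℂ} (hA : A.PosSemidef) (hB : B.PosSemidef) :
    0 ≤ (A * B).trace := by
  have h1 : (CFC.sqrt A * B * CFC.sqrt A).PosSemidef := by
    have := hB.mul_mul_conjTranspose_same (CFC.sqrt A)
    rwa [(CFC.sqrt_nonneg A).posSemidef.1.eq] at this
  have h2 := psd_trace_nonneg' h1
  rwa [trace_mul_cycle, CFC.sqrt_mul_sqrt_self A hA.nonneg] at h2

lemma swap_trace_kron {d : ℕ} (S : Matrix (Fin d × Fin d) (Fin d × Fin d) ℂ)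
    (hS : ∀ p q : Fin d × Fin d,
      S p q = if p.1 = q.2 ∧ p.2 = q.1 then 1 else 0)
    (A B : Matrix (Fin d) (Fin d) ℂ) :
    (S * Matrix.kroneckerMap (· * ·) A B).trace = (A * B).trace := by
  simp only [trace, diag, mul_apply, hS, ite_mul, one_mul, zero_mul, kroneckerMap_apply,
    Fintype.sum_prod_type, ite_and]
  simp only [Finset.sum_ite_eq, Finset.sum_ite_eq', Finset.mem_univ, if_true]
  rw [Finset.sum_comm]

/-- The swap operator has nonnegative expectation value on every separable
density matrix. -/
theorem swap_nonneg_on_separable_states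
    {d : ℕ} (hd : 1 ≤ d)
    (S : Matrix (Fin d × Fin d) (Fin d × Fin d) ℂ)
    (hS : ∀ p q : Fin d × Fin d,
      S p q = if p.1 = q.2 ∧ p.2 = q.1 then 1 else 0)
    (ρ : Matrix (Fin d × Fin d) (Fin d × Fin d) ℂ)
    (hsep : ∃ (K : ℕ) (p : Fin K → ℝ)
      (ρs : Fin K → Matrix (Fin d) (Fin d) ℂ)
      (σs : Fin K → Matrix (Fin d) (Fin d) ℂ),
      (∀ k, 0 < p k) ∧ (∑ k, p k = 1) ∧
      (∀ k, (ρs k).PosSemidef ∧ (ρs k).trace = 1) ∧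
      (∀ k, (σs k).PosSemidef ∧ (σs k).trace = 1) ∧
      ρ = ∑ k, ((p k : ℂ) • Matrix.kroneckerMap (· * ·) (ρs k) (σs k))) :
    0 ≤ (S * ρ).trace.re := by
  obtain ⟨K, p, ρs, σs, hp, hpsum, hρs, hσs, hρ⟩ := hsep
  have key : 0 ≤ (S * ρ).trace := by
    rw [hρ, Finset.mul_sum, trace_sum]
    refine Finset.sum_nonneg fun k _ => ?_
    rw [Matrix.mul_smul, trace_smul, swap_trace_kron S hS]
    exact smul_nonneg (by exact_mod_cast (hp k).le)
      (trace_mul_psd_nonneg' (hρs k).1 (hσs k).1)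
  exact (Complex.le_def.mp key).1
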